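/- arXiv:2208.05139 — 3 statements merged into one kernel-verified Lean document; each statement's English description precedes it below -/
import Mathlib

section
/- Let n_1, r be positive integers and n = n_1·r. Then the rational expression [n!]_q / ( [r!]_{q^{n_1}} · ([n_1!]_q)^r ), i.e., the q-multinomial coefficient [n choose n_1,...,n_1]_q divided by [r!]_{q^{n_1}}, is a polynomial in q with integer coefficients (equivalently, takes integer values at every prime power q). -/
open Finset

/-- The q-analogue `[m]_q = 1 + q + ⋯ + q^{m-1}` as an integer, for integer `q`. -/
def zqInt (q : ℤ) (m : ℕ) : ℤ := ∑ i ∈ Finset.range m, q ^ i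

/-- The q-factorial `[m!]_q = ∏_{k=1}^m [k]_q` as an integer, for integer `q`. -/
def zqFact (q : ℤ) (m : ℕ) : ℤ := ∏ k ∈ Finset.range m, zqInt q (k + 1)

lemma zqInt_succ (q : ℤ) (m : ℕ) : zqInt q (m + 1) = zqInt q m + q ^ m := by
  simp [zqInt, Finset.sum_range_succ]

lemma zqInt_add (q : ℤ) (a b : ℕ) : zqInt q (a + b) = zqInt q a + q ^ a * zqInt q b := by
  induction b with
  | zero => simp [zqInt]
  | succ b ih =>
      rw [← Nat.add_assoc, zqInt_succ, zqInt_succ, ih, pow_add]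
      ring

lemma zqFact_succ (q : ℤ) (m : ℕ) : zqFact q (m + 1) = zqFact q m * zqInt q (m + 1) := by
  simp [zqFact, Finset.prod_range_succ]

lemma zqInt_pow_mul (q : ℤ) (a k : ℕ) :
    zqInt (q ^ a) k * zqInt q a = zqInt q (a * k) := by
  induction k with
  | zero => simp [zqInt]
  | succ k ih =>
      have h2 : a * (k + 1) = a * k + a := by ring
      rw [zqInt_succ, h2, zqInt_add, ← ih, ← pow_mul]
      ring

/-- Gaussian binomial coefficient as an integer polynomial, via the q-Pascal rule. -/
noncomputable def gb : ℕ → ℕ → Polynomial ℤ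
  | _, 0 => 1
  | 0, _ + 1 => 0
  | n + 1, k + 1 => gb n k + Polynomial.X ^ (k + 1) * gb n (k + 1)
  termination_by n k => n + k

lemma gb_zero (n : ℕ) : gb n 0 = 1 := by cases n <;> simp [gb]

lemma gb_zero_succ (k : ℕ) : gb 0 (k + 1) = 0 := by simp [gb]

lemma gb_succ_succ (n k : ℕ) :
    gb (n + 1) (k + 1) = gb n k + Polynomial.X ^ (k + 1) * gb n (k + 1) := by
  simp [gb]

lemma gb_eq_zero : ∀ {n k : ℕ}, n < k → gb n k = 0 := by
  intro n
  induction n with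
  | zero =>
      intro k hk
      match k, hk with
      | k + 1, _ => exact gb_zero_succ k
  | succ n ih =>
      intro k hk
      match k, hk with
      | k + 1, hk =>
          rw [gb_succ_succ, ih (by omega), ih (by omega)]
          ring

lemma gb_eval (q : ℤ) :
    ∀ n k : ℕ, k ≤ n →
      (gb n k).eval q * (zqFact q k * zqFact q (n - k)) = zqFact q n := by
  intro n
  induction n with
  | zero =>
      intro k hk
      interval_cases k
      simp [gb_zero, zqFact]
  | succ n ih =>
      intro k hk
      match k with
      | 0 => simp [gb_zero, zqFact]
      | k + 1 =>
          have hk' : k ≤ n := by omega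
          have heval : (gb (n + 1) (k + 1)).eval q
              = (gb n k).eval q + q ^ (k + 1) * (gb n (k + 1)).eval q := by
            rw [gb_succ_succ]; simp
          have hZ : zqInt q (n + 1) = zqInt q (k + 1) + q ^ (k + 1) * zqInt q (n - k) := by
            have h : n + 1 = (k + 1) + (n - k) := by omega
            rw [h, zqInt_add]
          rcases Nat.lt_or_ge k n with hlt | hge
          · -- k + 1 ≤ n
            have ih1 := ih k hk'
            have ih2 := ih (k + 1) hlt
            have hs1 : n + 1 - (k + 1) = (n - (k + 1)) + 1 := by omega
            have he : n - (k + 1) + 1 = n - k := by omega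
            have hF : zqFact q (n - k) = zqFact q (n - (k + 1)) * zqInt q (n - k) := by
              rw [← he, zqFact_succ]
            have hFk : zqFact q (k + 1) = zqFact q k * zqInt q (k + 1) := zqFact_succ q k
            rw [heval, hs1, zqFact_succ, zqFact_succ, he, zqFact_succ, hZ]
            linear_combination zqInt q (k + 1) * ih1 + q ^ (k + 1) * zqInt q (n - k) * ih2
              - zqInt q (k + 1) * (gb n k).eval q * zqFact q k * hF
              - q ^ (k + 1) * zqInt q (n - k) * (gb n (k + 1)).eval q * zqFact q (n - (k + 1)) * hFk
          · -- k = n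
            have hkn : k = n := by omega
            subst hkn
            have ih1 := ih k (le_refl k)
            rw [heval, gb_eq_zero (Nat.lt_succ_self k)]
            simp only [Polynomial.eval_zero, mul_zero, add_zero, Nat.sub_self] at ih1 ⊢
            have h0 : zqFact q 0 = 1 := by simp [zqFact]
            rw [h0, mul_one] at ih1
            rw [h0, mul_one, zqFact_succ]
            linear_combination zqInt q (k + 1) * ih1

lemma key (q : ℤ) (n₁ : ℕ) (hn₁ : 0 < n₁) :
    ∀ r : ℕ,
      (∏ j ∈ Finset.range r, gb (n₁ * (j + 1) - 1) (n₁ - 1)).eval q *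
        ((∏ j ∈ Finset.range r, zqInt q (n₁ * (j + 1))) * (zqFact q (n₁ - 1)) ^ r)
        = zqFact q (n₁ * r) := by
  intro r
  induction r with
  | zero => simp [zqFact]
  | succ r ih =>
      rw [Finset.prod_range_succ, Finset.prod_range_succ, Polynomial.eval_mul, pow_succ]
      have hle : n₁ - 1 ≤ n₁ * (r + 1) - 1 := by
        have : n₁ * 1 ≤ n₁ * (r + 1) := Nat.mul_le_mul_left _ (by omega)
        omega
      have hgb := gb_eval q (n₁ * (r + 1) - 1) (n₁ - 1) hle
      have hs : n₁ * (r + 1) - 1 - (n₁ - 1) = n₁ * r := by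
        have h : n₁ * (r + 1) = n₁ * r + n₁ := by ring
        omega
      rw [hs] at hgb
      have hstep : zqFact q (n₁ * (r + 1))
          = zqFact q (n₁ * (r + 1) - 1) * zqInt q (n₁ * (r + 1)) := by
        have hpos : 0 < n₁ * (r + 1) := by positivity
        have h1 : n₁ * (r + 1) = (n₁ * (r + 1) - 1) + 1 := by omega
        conv_lhs => rw [h1]
        rw [zqFact_succ, ← h1]
      rw [hstep, ← hgb, ← ih]
      ring

/-- For positive integers `n₁, r` and `n = n₁·r`, the expression
`[n!]_q / ([r!]_{q^{n₁}} · ([n₁!]_q)^r)` is a polynomial in `q` with integer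
coefficients: there is an integer polynomial `P` with
`P(q)·([r!]_{q^{n₁}}·([n₁!]_q)^r) = [n!]_q` for every integer `q`. -/
theorem stmt_4 (n₁ r n : ℕ) (hn₁ : 0 < n₁) (hr : 0 < r) (hmul : n = n₁ * r) :
    ∃ P : Polynomial ℤ, ∀ q : ℤ,
      P.eval q * ((∏ k ∈ Finset.range r, zqInt (q ^ n₁) (k + 1)) * (zqFact q n₁) ^ r)
        = zqFact q n := by
  refine ⟨∏ j ∈ Finset.range r, gb (n₁ * (j + 1) - 1) (n₁ - 1), fun q => ?_⟩
  have hfact : zqFact q n₁ = zqFact q (n₁ - 1) * zqInt q n₁ := by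
    have h1 : n₁ = (n₁ - 1) + 1 := by omega
    conv_lhs => rw [h1]
    rw [zqFact_succ, ← h1]
  have hkey := key q n₁ hn₁ r
  have hprod : (∏ k ∈ Finset.range r, zqInt (q ^ n₁) (k + 1)) * (zqInt q n₁) ^ r
      = ∏ j ∈ Finset.range r, zqInt q (n₁ * (j + 1)) := by
    have h : (zqInt q n₁) ^ r = ∏ _k ∈ Finset.range r, zqInt q n₁ := by simp
    rw [h, ← Finset.prod_mul_distrib]
    exact Finset.prod_congr rfl fun k _ => zqInt_pow_mul q n₁ (k + 1)
  rw [hmul, ← hkey, hfact, mul_pow, ← hprod]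
  ring
end

section
/- Let G be a group, H a subgroup, K a subgroup, and let S ⊆ G be a complete set of representatives for the double cosets H\G/K. For a representation (λ, W) of H over a field, let Ind denote the space of functions f: G → W with f(hg) = λ(h)f(g) for all h ∈ H, g ∈ G, with G acting by right translation. Then the K-invariants of the subspace of functions supported on finitely many double cosets are isomorphic, via f ↦ (f(g))_{g∈S}, to the direct sum over g ∈ S of the spaces of λ(H ∩ gKg^{-1})-invariant vectors W^{H ∩ gKg^{-1}}. -/
variable (F G : Type) [Field F] [Group G] (H K : Subgroup G)
  (W : Type) [AddCommGroup W] [Module F W] (ρ : Representation F H W)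

/-- The subspace `W^{H ∩ sKs⁻¹}` of vectors fixed by `λ(H ∩ sKs⁻¹)`. -/
def fixSub (s : G) : Submodule F W where
  carrier := {w | ∀ h : H, (∃ k ∈ K, (h : G) = s * k * s⁻¹) → ρ h w = w}
  add_mem' := by
    intro a b ha hb h hh
    simp [map_add, ha h hh, hb h hh]
  zero_mem' := by intro h _; simp
  smul_mem' := by
    intro c a ha h hh
    simp [map_smul, ha h hh]

/-- The `K`-invariants of the space of `H`-equivariant functions `f : G → W`
(with `G` acting by right translation) supported on finitely many double cosets,
the support condition being recorded on a set `S` of double-coset representatives. -/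
def indK (S : Set G) : Submodule F (G → W) where
  carrier := {f | (∀ (h : H) (g : G), f ((h : G) * g) = ρ h (f g)) ∧
    (∀ k ∈ K, ∀ g : G, f (g * k) = f g) ∧ {s : S | f s ≠ 0}.Finite}
  add_mem' := by
    rintro a b ⟨ha1, ha2, ha3⟩ ⟨hb1, hb2, hb3⟩
    refine ⟨fun h g => by simp [ha1 h g, hb1 h g],
      fun k hk g => by simp [ha2 k hk g, hb2 k hk g], ?_⟩
    refine (ha3.union hb3).subset ?_
    intro s hs
    by_contra hc
    simp only [Set.mem_union, Set.mem_setOf_eq, not_or, not_not] at hc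
    exact hs (by simp [Pi.add_apply, hc.1, hc.2])
  zero_mem' := by
    refine ⟨by simp, by simp, ?_⟩
    simp
  smul_mem' := by
    rintro c a ⟨h1, h2, h3⟩
    refine ⟨fun h g => by simp [h1 h g], fun k hk g => by simp [h2 k hk g], ?_⟩
    refine h3.subset ?_
    intro s hs
    simp only [Set.mem_setOf_eq, Pi.smul_apply] at hs ⊢
    intro h0
    exact hs (by simp [h0])

lemma mem_indK {S : Set G} {f : G → W} :
    f ∈ indK F G H K W ρ S ↔ ((∀ (h : H) (g : G), f ((h : G) * g) = ρ h (f g)) ∧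
      (∀ k ∈ K, ∀ g : G, f (g * k) = f g) ∧ {s : S | f s ≠ 0}.Finite) := Iff.rfl

lemma key_fix {s : G} {w : W} (hw : w ∈ fixSub F G H K W ρ s)
    {h₁ h₂ k₁ k₂ : G} (hh₁ : h₁ ∈ H) (hh₂ : h₂ ∈ H) (hk₁ : k₁ ∈ K) (hk₂ : k₂ ∈ K)
    (heq : h₁ * s * k₁ = h₂ * s * k₂) :
    ρ ⟨h₁, hh₁⟩ w = ρ ⟨h₂, hh₂⟩ w := by
  have hmem : h₂⁻¹ * h₁ ∈ H := mul_mem (inv_mem hh₂) hh₁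
  have hconj : (h₂⁻¹ * h₁ : G) = s * (k₂ * k₁⁻¹) * s⁻¹ := by
    have e1 : h₁ * s = h₂ * s * k₂ * k₁⁻¹ := by rw [← heq]; group
    have e2 : h₁ = h₂ * (s * (k₂ * k₁⁻¹) * s⁻¹) := by
      have e3 := congrArg (· * s⁻¹) e1
      simp only [mul_inv_cancel_right] at e3
      rw [e3]; group
    rw [e2]; group
  have hfix : ρ ⟨h₂⁻¹ * h₁, hmem⟩ w = w :=
    hw ⟨h₂⁻¹ * h₁, hmem⟩ ⟨k₂ * k₁⁻¹, mul_mem hk₂ (inv_mem hk₁), hconj⟩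
  have hsplit : (⟨h₁, hh₁⟩ : H) = ⟨h₂, hh₂⟩ * ⟨h₂⁻¹ * h₁, hmem⟩ := by
    ext; simp [mul_assoc]
  rw [hsplit, map_mul, Module.End.mul_apply, hfix]

lemma mem_fixSub_of_indK {S : Set G} {f : G → W} (hf : f ∈ indK F G H K W ρ S) (s : G) :
    f s ∈ fixSub F G H K W ρ s := by
  rintro h ⟨k, hk, hhk⟩
  have h1 := hf.1 h s
  have h2 := hf.2.1 k hk s
  have h3 : (h : G) * s = s * k := by rw [hhk]; group
  rw [← h1, h3, h2]

noncomputable def toDF {S : Set G} (f : indK F G H K W ρ S) :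
    Π₀ s : S, fixSub F G H K W ρ (s : G) :=
  letI := Classical.decEq S
  DFinsupp.mk f.2.2.2.toFinset
    (fun s => ⟨f.1 (s : G), mem_fixSub_of_indK F G H K W ρ f.2 _⟩)

lemma toDF_apply {S : Set G} (f : indK F G H K W ρ S) (s : S) :
    ((toDF F G H K W ρ f) s : W) = f.1 (s : G) := by
  letI := Classical.decEq S
  rw [toDF, DFinsupp.mk_apply]
  split
  · rfl
  · rename_i hns
    rw [Set.Finite.mem_toFinset] at hns
    simp only [Set.mem_setOf_eq, not_not] at hns
    simp [hns]

noncomputable def evMap (S : Set G) :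
    (indK F G H K W ρ S) →ₗ[F] (Π₀ s : S, fixSub F G H K W ρ (s : G)) where
  toFun := toDF F G H K W ρ
  map_add' f g := DFinsupp.ext fun s => Subtype.ext (by
    simp [toDF_apply])
  map_smul' c f := DFinsupp.ext fun s => Subtype.ext (by
    simp [toDF_apply])

/-- Mackey-type formula: if `S` is a complete set of representatives for the double cosets
`H\G/K`, then evaluation `f ↦ (f(s))_{s∈S}` is a linear isomorphism from the finitely
supported `K`-invariant induced space onto `⊕_{s∈S} W^{H ∩ sKs⁻¹}`. -/
theorem stmt_7 (S : Set G)
    (hS : ∀ g : G, ∃! s, s ∈ S ∧ ∃ h ∈ H, ∃ k ∈ K, g = h * s * k) :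
    ∃ e : (indK F G H K W ρ S) ≃ₗ[F] (Π₀ s : S, fixSub F G H K W ρ (s : G)),
      ∀ (f : indK F G H K W ρ S) (s : S), ((e f) s : W) = (f : G → W) (s : G) := by
  classical
  choose σ hσS h hhH k hkK hfac using fun g => (hS g).exists
  have huniq : ∀ (g s' : G), s' ∈ S → (∃ h ∈ H, ∃ k ∈ K, g = h * s' * k) → s' = σ g := by
    intro g s' hs' hex
    exact (hS g).unique ⟨hs', hex⟩ ⟨hσS g, h g, hhH g, k g, hkK g, hfac g⟩
  have hσself : ∀ s : S, σ (s : G) = (s : G) := by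
    intro s
    exact (huniq (s : G) (s : G) s.2 ⟨1, one_mem H, 1, one_mem K, by group⟩).symm
  have hinj : Function.Injective (evMap F G H K W ρ S) := by
    intro f₁ f₂ hfe
    have hv : ∀ s : S, f₁.1 (s : G) = f₂.1 (s : G) := by
      intro s
      have := congrArg (fun v => (v s : W)) hfe
      simpa only [evMap, LinearMap.coe_mk, AddHom.coe_mk, toDF_apply] using this
    have key : ∀ f : indK F G H K W ρ S, ∀ g : G,
        f.1 g = ρ ⟨h g, hhH g⟩ (f.1 (σ g)) := by
      intro f g
      have e1 := f.2.1 ⟨h g, hhH g⟩ (σ g * k g)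
      have e2 := f.2.2.1 (k g) (hkK g) (σ g)
      calc f.1 g = f.1 (h g * (σ g * k g)) := by rw [← mul_assoc, ← hfac g]
        _ = ρ ⟨h g, hhH g⟩ (f.1 (σ g * k g)) := e1
        _ = ρ ⟨h g, hhH g⟩ (f.1 (σ g)) := by rw [e2]
    refine Subtype.ext (funext fun g => ?_)
    rw [key f₁ g, key f₂ g, hv ⟨σ g, hσS g⟩]
  have hsurj : Function.Surjective (evMap F G H K W ρ S) := by
    intro v
    set fI : G → W := fun g => ρ ⟨h g, hhH g⟩ (v ⟨σ g, hσS g⟩ : W) with hfI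
    have hσl : ∀ (h₀ : H) (g : G), σ ((h₀ : G) * g) = σ g := by
      intro h₀ g
      refine (huniq _ _ (hσS g) ⟨(h₀ : G) * h g, mul_mem h₀.2 (hhH g), k g, hkK g, ?_⟩).symm
      conv_lhs => rw [hfac g]
      group
    have hσr : ∀ (g k₀ : G), k₀ ∈ K → σ (g * k₀) = σ g := by
      intro g k₀ hk₀
      refine (huniq _ _ (hσS g) ⟨h g, hhH g, k g * k₀, mul_mem (hkK g) hk₀, ?_⟩).symm
      conv_lhs => rw [hfac g]
      group
    have hfix : ∀ g : G, ((v ⟨σ g, hσS g⟩ : W)) ∈ fixSub F G H K W ρ (σ g) :=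
      fun g => (v ⟨σ g, hσS g⟩).2
    have hmem : fI ∈ indK F G H K W ρ S := by
      refine ⟨?_, ?_, ?_⟩
      · intro h₀ g
        have hσeq : σ ((h₀ : G) * g) = σ g := hσl h₀ g
        have hveq : (⟨σ ((h₀ : G) * g), hσS _⟩ : S) = ⟨σ g, hσS g⟩ := Subtype.ext hσeq
        have hdec : h ((h₀ : G) * g) * σ g * k ((h₀ : G) * g)
            = ((h₀ : G) * h g) * σ g * k g := by
          calc h ((h₀ : G) * g) * σ g * k ((h₀ : G) * g)
              = h ((h₀ : G) * g) * σ ((h₀ : G) * g) * k ((h₀ : G) * g) := by rw [hσeq]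
            _ = (h₀ : G) * g := (hfac _).symm
            _ = (h₀ : G) * (h g * σ g * k g) := by rw [← hfac g]
            _ = ((h₀ : G) * h g) * σ g * k g := by group
        have hk1 : (⟨(h₀ : G) * h g, mul_mem h₀.2 (hhH g)⟩ : H)
            = h₀ * ⟨h g, hhH g⟩ := rfl
        show ρ ⟨h ((h₀ : G) * g), hhH _⟩ (v ⟨σ ((h₀ : G) * g), hσS _⟩ : W)
          = ρ h₀ (ρ ⟨h g, hhH g⟩ (v ⟨σ g, hσS g⟩ : W))
        rw [hveq, key_fix F G H K W ρ (hfix g) (hhH _) (mul_mem h₀.2 (hhH g))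
          (hkK _) (hkK g) hdec, hk1, map_mul,
          Module.End.mul_apply]
      · intro k₀ hk₀ g
        have hσeq : σ (g * k₀) = σ g := hσr g k₀ hk₀
        have hveq : (⟨σ (g * k₀), hσS _⟩ : S) = ⟨σ g, hσS g⟩ := Subtype.ext hσeq
        have hdec : h (g * k₀) * σ g * (k (g * k₀) * k₀⁻¹) = h g * σ g * k g := by
          have e1 : h (g * k₀) * σ (g * k₀) * k (g * k₀) = h g * σ g * (k g * k₀) := by
            rw [← hfac (g * k₀)]
            conv_rhs => rw [← mul_assoc, ← hfac g]
          rw [hσeq] at e1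
          have := congrArg (· * k₀⁻¹) e1
          simpa [mul_assoc] using this
        show ρ ⟨h (g * k₀), hhH _⟩ (v ⟨σ (g * k₀), hσS _⟩ : W)
          = ρ ⟨h g, hhH g⟩ (v ⟨σ g, hσS g⟩ : W)
        rw [hveq]
        exact key_fix F G H K W ρ (hfix g) (hhH _) (hhH g)
          (mul_mem (hkK _) (inv_mem hk₀)) (hkK g) hdec
      · have hsub : {s : S | fI (s : G) ≠ 0} ⊆ ↑v.support := by
          intro s hs
          rw [Finset.mem_coe, DFinsupp.mem_support_iff]
          intro hvz
          refine hs ?_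
          have hveq : (⟨σ (s : G), hσS _⟩ : S) = s := Subtype.ext (hσself s)
          show ρ ⟨h (s : G), hhH _⟩ (v ⟨σ (s : G), hσS _⟩ : W) = 0
          rw [hveq, hvz]
          simp
        exact Set.Finite.subset v.support.finite_toSet hsub
    refine ⟨⟨fI, hmem⟩, ?_⟩
    refine DFinsupp.ext fun s => Subtype.ext ?_
    have h1 : ((evMap F G H K W ρ S ⟨fI, hmem⟩) s : W) = fI (s : G) :=
      toDF_apply F G H K W ρ ⟨fI, hmem⟩ s
    rw [h1]
    have hveq : (⟨σ (s : G), hσS _⟩ : S) = s := Subtype.ext (hσself s)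
    have hdec : h (s : G) * (s : G) * k (s : G) = 1 * (s : G) * 1 := by
      rw [one_mul, mul_one]
      conv_rhs => rw [hfac (s : G)]
      rw [hσself s]
    show ρ ⟨h (s : G), hhH _⟩ (v ⟨σ (s : G), hσS _⟩ : W) = (v s : W)
    rw [hveq, key_fix F G H K W ρ (v s).2 (hhH _) (one_mem H) (hkK _) (one_mem K) hdec]
    show ρ (1 : H) (v s : W) = (v s : W)
    rw [map_one]
    rfl
  refine ⟨LinearEquiv.ofBijective _ ⟨hinj, hsurj⟩, ?_⟩
  intro f s
  show ((evMap F G H K W ρ S f) s : W) = (f : G → W) (s : G)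
  exact toDF_apply F G H K W ρ f s
end

section
/- Let q > 1 be a real number and n a positive integer. For the sum over all partitions (a_1 ≥ a_2 ≥ ... ≥ a_n = 0) of integers with consecutive gaps a_i - a_{i+1} < N, the quantity ∑ q^{∑_{i<j} min(a_i - a_j, N)} grows like q^{(n(n-1)/2)·N}: there exist constants 0 < c < C (depending on n and q but not N) such that c·q^{(n(n-1)/2)N} ≤ ∑_{a_1≥...≥a_n=0, a_i - a_{i+1} < N} q^{∑_{i<j} min(a_i-a_j, N)} ≤ C·q^{(n(n-1)/2)N} for all sufficiently large N. -/
open Finset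

private def acc {m : ℕ} (g : Fin m → ℕ) (i : Fin (m + 1)) : ℕ :=
  ∑ k ∈ Finset.univ.filter (fun k : Fin m => i.1 ≤ k.1), g k

private lemma acc_last {m : ℕ} (g : Fin m → ℕ) : acc g (Fin.last m) = 0 := by
  unfold acc
  rw [Finset.filter_false_of_mem, Finset.sum_empty]
  intro k _
  simp only [Fin.val_last, not_le]
  omega

private lemma acc_castSucc {m : ℕ} (g : Fin m → ℕ) (k : Fin m) :
    acc g k.castSucc = g k + acc g k.succ := by
  unfold acc
  have h : Finset.univ.filter (fun j : Fin m => (k.castSucc).1 ≤ j.1)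
      = insert k (Finset.univ.filter (fun j : Fin m => (k.succ).1 ≤ j.1)) := by
    ext j
    simp only [Finset.mem_filter, Finset.mem_univ, true_and, Finset.mem_insert,
      Fin.coe_castSucc, Fin.val_succ, Fin.ext_iff]
    omega
  rw [h, Finset.sum_insert (by simp)]

private lemma acc_antitone {m : ℕ} (g : Fin m → ℕ) : Antitone (acc g) := by
  intro i j hij
  apply Finset.sum_le_sum_of_subset
  intro k hk
  rw [Fin.le_def] at hij
  simp only [Finset.mem_filter, Finset.mem_univ, true_and] at *
  omega

private lemma acc_le {m : ℕ} (g : Fin m → ℕ) (B : ℕ) (hg : ∀ k, g k ≤ B) (i : Fin (m + 1)) :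
    acc g i ≤ m * B := by
  have h1 : acc g i ≤ ∑ k : Fin m, (g k) :=
    Finset.sum_le_sum_of_subset (Finset.filter_subset _ _)
  have h2 : ∑ k : Fin m, g k ≤ ∑ _k : Fin m, B := Finset.sum_le_sum fun k _ => hg k
  simpa using h1.trans h2

private lemma acc_gap {m : ℕ} (a : Fin (m + 1) → ℕ) (ha : Antitone a)
    (h0 : a (Fin.last m) = 0) :
    acc (fun k => a k.castSucc - a k.succ) = a := by
  funext i
  induction i using Fin.reverseInduction with
  | last => rw [acc_last, h0]
  | cast k ih =>
    rw [acc_castSucc, ih]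
    have := ha (Fin.castSucc_le_succ k)
    omega

private lemma acc_ge {m : ℕ} (g : Fin m → ℕ) (k : Fin m) (j : Fin (m + 1))
    (hkj : k.succ ≤ j) : g k + acc g j ≤ acc g k.castSucc := by
  rw [acc_castSucc]
  have := acc_antitone g hkj
  omega

private lemma cardP (m : ℕ) :
    (Finset.univ.offDiag.filter (fun p : Fin (m + 1) × Fin (m + 1) => p.1 < p.2)).card
      = (m + 1) * m / 2 := by
  classical
  have hswap : (Finset.univ.offDiag.filter
        (fun p : Fin (m + 1) × Fin (m + 1) => p.1 < p.2)).card
      = (Finset.univ.offDiag.filter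
        (fun p : Fin (m + 1) × Fin (m + 1) => ¬ p.1 < p.2)).card := by
    apply Finset.card_nbij' Prod.swap Prod.swap ?_ ?_
      (fun a _ => Prod.swap_swap a) (fun a _ => Prod.swap_swap a) <;>
    · intro p hp
      simp only [Finset.mem_filter, Finset.mem_offDiag, Finset.mem_univ, true_and, ne_eq,
        Prod.fst_swap, Prod.snd_swap, Fin.lt_def, Fin.ext_iff, not_lt, Prod.swap_swap, Finset.mem_coe] at *
      omega
  have hsplit := Finset.card_filter_add_card_filter_not
    (s := (Finset.univ : Finset (Fin (m + 1))).offDiag)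
    (p := fun p : Fin (m + 1) × Fin (m + 1) => p.1 < p.2)
  rw [Finset.offDiag_card, Finset.card_univ, Fintype.card_fin] at hsplit
  have h : (m + 1) * m + (m + 1) = (m + 1) * (m + 1) := by ring
  omega


/-- The sum `∑ q^{∑_{i<j} min(aᵢ-aⱼ, N)}` over partitions `a₁ ≥ ⋯ ≥ aₙ = 0` with
consecutive gaps `aᵢ - aᵢ₊₁ < N` grows like `q^{(n(n-1)/2)·N}`. -/
theorem stmt_16 (q : ℝ) (hq : 1 < q) (n : ℕ) (hn : 0 < n) :
    ∃ c C : ℝ, 0 < c ∧ c < C ∧ ∃ N₀ : ℕ, ∀ N : ℕ, N₀ ≤ N →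
      c * q ^ (n * (n - 1) / 2 * N) ≤
        (∑ᶠ a ∈ {a : Fin n → ℕ | Antitone a ∧ a ⟨n - 1, by omega⟩ = 0 ∧
            ∀ i : Fin n, ∀ h : i.1 + 1 < n, a i - a ⟨i.1 + 1, h⟩ < N},
          (q ^ (∑ p ∈ Finset.univ.offDiag.filter (fun p : Fin n × Fin n => p.1 < p.2),
            min (a p.1 - a p.2) N) : ℝ)) ∧
      (∑ᶠ a ∈ {a : Fin n → ℕ | Antitone a ∧ a ⟨n - 1, by omega⟩ = 0 ∧
            ∀ i : Fin n, ∀ h : i.1 + 1 < n, a i - a ⟨i.1 + 1, h⟩ < N},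
          (q ^ (∑ p ∈ Finset.univ.offDiag.filter (fun p : Fin n × Fin n => p.1 < p.2),
            min (a p.1 - a p.2) N) : ℝ)) ≤ C * q ^ (n * (n - 1) / 2 * N) := by
  classical
  obtain ⟨m, rfl⟩ : ∃ m, n = m + 1 := ⟨n - 1, by omega⟩

  simp only [Nat.add_sub_cancel]
  have hq0 : (0 : ℝ) < q := by linarith
  set K := (m + 1) * m / 2 with hK
  set r := q⁻¹ with hr
  have hr0 : 0 < r := by positivity
  have hr1 : r < 1 := by
    rw [hr]
    exact inv_lt_one_of_one_lt₀ hq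
  have h1r : (0 : ℝ) < 1 - r := by linarith
  have hBpos : (0 : ℝ) < (1 - r)⁻¹ := by positivity
  refine ⟨(q ^ K)⁻¹, (1 - r)⁻¹ ^ m + (q ^ K)⁻¹ + 1, by positivity, ?_, 1, ?_⟩
  · nlinarith [pow_nonneg hBpos.le m]
  intro N hN
  obtain ⟨N', rfl⟩ : ∃ N', N = N' + 1 := ⟨N - 1, by omega⟩
  set P := Finset.univ.offDiag.filter (fun p : Fin (m + 1) × Fin (m + 1) => p.1 < p.2) with hP
  have hcardP : P.card = K := by rw [hP, hK]; exact cardP m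
  set G := Fintype.piFinset (fun _ : Fin m => Finset.range (N' + 1)) with hG
  set T := (Fintype.piFinset (fun _ : Fin (m + 1) => Finset.range (m * (N' + 1) + 1))).filter
      (fun a => Antitone a ∧ a (Fin.last m) = 0 ∧
        ∀ k : Fin m, a k.castSucc - a k.succ < N' + 1) with hT
  have hmemT : ∀ a ∈ T, Antitone a ∧ a (Fin.last m) = 0 ∧
      ∀ k : Fin m, a k.castSucc - a k.succ < N' + 1 :=
    fun a ha => (Finset.mem_filter.1 ha).2
  -- the set in the statement equals ↑T
  have hS : {a : Fin (m + 1) → ℕ | Antitone a ∧ a ⟨m, by omega⟩ = 0 ∧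
        ∀ i : Fin (m + 1), ∀ h : i.1 + 1 < m + 1, a i - a ⟨i.1 + 1, h⟩ < N' + 1}
      = (T : Set (Fin (m + 1) → ℕ)) := by
    ext a
    simp only [Set.mem_setOf_eq, hT, Finset.coe_filter, Finset.mem_filter,
      Fintype.mem_piFinset, Finset.mem_range]
    constructor
    · rintro ⟨h1, h2, h3⟩
      have h2' : a (Fin.last m) = 0 := h2
      have hgap : ∀ k : Fin m, a k.castSucc - a k.succ < N' + 1 := by
        intro k
        have hlt : k.castSucc.1 + 1 < m + 1 := by simp
        have h4 := h3 k.castSucc hlt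
        have h5 : (⟨k.castSucc.1 + 1, hlt⟩ : Fin (m + 1)) = k.succ := by
          simp [Fin.ext_iff]
        rwa [h5] at h4
      refine ⟨fun i => ?_, h1, h2', hgap⟩
      have hacc : acc (fun k : Fin m => a k.castSucc - a k.succ) = a := acc_gap a h1 h2'
      have hle := acc_le (fun k : Fin m => a k.castSucc - a k.succ) N'
        (fun k => by show a k.castSucc - a k.succ ≤ N'; have := hgap k; omega) i
      rw [hacc] at hle
      have : m * N' ≤ m * (N' + 1) := Nat.mul_le_mul_left _ (by omega)
      omega
    · rintro ⟨hbd, h1, h2, h3⟩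
      refine ⟨h1, h2, fun i h => ?_⟩
      have hi : i.1 < m := by omega
      have e1 : a i = a (⟨i.1, hi⟩ : Fin m).castSucc := congrArg a (by simp [Fin.ext_iff])
      have e2 : a ⟨i.1 + 1, h⟩ = a (⟨i.1, hi⟩ : Fin m).succ := congrArg a (by simp [Fin.ext_iff])
      rw [e1, e2]
      exact h3 _
  -- convert the finsum to a sum over gap vectors
  have hsum : (∑ᶠ a ∈ {a : Fin (m + 1) → ℕ | Antitone a ∧ a ⟨m, by omega⟩ = 0 ∧
        ∀ i : Fin (m + 1), ∀ h : i.1 + 1 < m + 1, a i - a ⟨i.1 + 1, h⟩ < N' + 1},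
        (q ^ (∑ p ∈ P, min (a p.1 - a p.2) (N' + 1)) : ℝ))
      = ∑ g ∈ G, (q ^ (∑ p ∈ P, min (acc g p.1 - acc g p.2) (N' + 1)) : ℝ) := by
    rw [hS, finsum_mem_coe_finset]
    refine Finset.sum_nbij' (fun a => fun k : Fin m => a k.castSucc - a k.succ) acc
      ?_ ?_ ?_ ?_ ?_
    · intro a ha
      rw [hG]
      simp only [Fintype.mem_piFinset, Finset.mem_range]
      exact (hmemT a ha).2.2
    · intro g hg
      rw [hG] at hg
      simp only [Fintype.mem_piFinset, Finset.mem_range] at hg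
      rw [hT]
      refine Finset.mem_filter.2 ⟨?_, acc_antitone g, acc_last g, fun k => ?_⟩
      · simp only [Fintype.mem_piFinset, Finset.mem_range]
        intro i
        have hle := acc_le g N' (fun k => by have := hg k; omega) i
        have : m * N' ≤ m * (N' + 1) := Nat.mul_le_mul_left _ (by omega)
        omega
      · rw [acc_castSucc]
        have := hg k
        omega
    · intro a ha
      exact acc_gap a (hmemT a ha).1 (hmemT a ha).2.1
    · intro g hg
      funext k
      show acc g k.castSucc - acc g k.succ = g k
      rw [acc_castSucc]
      omega
    · intro a ha
      rw [acc_gap a (hmemT a ha).1 (hmemT a ha).2.1]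
  rw [hsum]
  constructor
  · -- lower bound
    show ((q : ℝ) ^ K)⁻¹ * q ^ (K * (N' + 1)) ≤ _
    have hterm : (q : ℝ) ^ (K * N') ≤
        ∑ g ∈ G, (q ^ (∑ p ∈ P, min (acc g p.1 - acc g p.2) (N' + 1)) : ℝ) := by
      have hg0 : (fun _ : Fin m => N') ∈ G := by
        rw [hG]; simp [Fintype.mem_piFinset]
      refine le_trans ?_ (Finset.single_le_sum (f := fun g : Fin m → ℕ =>
        (q ^ (∑ p ∈ P, min (acc g p.1 - acc g p.2) (N' + 1)) : ℝ))
        (fun g _ => by positivity) hg0)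
      apply pow_le_pow_right₀ hq.le
      have hpp : ∀ p ∈ P, N' ≤ min (acc (fun _ : Fin m => N') p.1
          - acc (fun _ : Fin m => N') p.2) (N' + 1) := by
        intro p hp
        rw [hP, Finset.mem_filter] at hp
        have hlt : p.1 < p.2 := hp.2
        have hlt' : p.1.1 < p.2.1 := hlt
        have h1 : p.1.1 < m := by have := p.2.2; omega
        have e1 : p.1 = (⟨p.1.1, h1⟩ : Fin m).castSucc := by simp [Fin.ext_iff]
        have hkj : (⟨p.1.1, h1⟩ : Fin m).succ ≤ p.2 := by
          rw [Fin.le_def]; simpa using hlt'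
        have hge : N' + acc (fun _ : Fin m => N') p.2
            ≤ acc (fun _ : Fin m => N') p.1 := by
          have hge0 := acc_ge (fun _ : Fin m => N') ⟨p.1.1, h1⟩ p.2 hkj
          rw [← e1] at hge0
          exact hge0
        omega
      calc K * N' = P.card * N' := by rw [hcardP]
        _ ≤ _ := by simpa using Finset.card_nsmul_le_sum P _ N' hpp
    have hcq : ((q : ℝ) ^ K)⁻¹ * q ^ (K * (N' + 1)) = q ^ (K * N') := by
      have he : (q : ℝ) ^ (K * (N' + 1)) = q ^ (K * N') * q ^ K := by
        rw [Nat.mul_succ, pow_add]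
      rw [he]
      field_simp
    rw [hcq]
    exact hterm
  · -- upper bound
    show _ ≤ ((1 - r)⁻¹ ^ m + (q ^ K)⁻¹ + 1) * q ^ (K * (N' + 1))
    have hgeom : ∀ M : ℕ, ∑ j ∈ Finset.range M, r ^ j ≤ (1 - r)⁻¹ := by
      intro M
      have hmul := geom_sum_mul r M
      have hpos : (0 : ℝ) ≤ r ^ M := by positivity
      have h2 : (∑ j ∈ Finset.range M, r ^ j) * (1 - r) ≤ 1 := by nlinarith
      calc ∑ j ∈ Finset.range M, r ^ j
          = (∑ j ∈ Finset.range M, r ^ j) * (1 - r) * (1 - r)⁻¹ := by field_simp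
        _ ≤ 1 * (1 - r)⁻¹ := mul_le_mul_of_nonneg_right h2 hBpos.le
        _ = (1 - r)⁻¹ := one_mul _
    have hfactor : ∑ t ∈ Finset.range (N' + 1), r ^ (N' + 1 - t) ≤ (1 - r)⁻¹ := by
      have e : ∑ t ∈ Finset.range (N' + 1), r ^ (N' + 1 - t)
          = ∑ j ∈ Finset.range (N' + 1), r ^ (j + 1) := by
        rw [← Finset.sum_range_reflect (fun j => r ^ (j + 1)) (N' + 1)]
        refine Finset.sum_congr rfl fun t ht => ?_
        rw [Finset.mem_range] at ht
        congr 1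
        omega
      rw [e]
      calc ∑ j ∈ Finset.range (N' + 1), r ^ (j + 1)
          ≤ ∑ j ∈ Finset.range (N' + 1), r ^ j :=
            Finset.sum_le_sum fun j _ => pow_le_pow_of_le_one hr0.le hr1.le (by omega)
        _ ≤ (1 - r)⁻¹ := hgeom _
    have hmK : m ≤ K := by
      rw [hK]
      refine (Nat.le_div_iff_mul_le (by norm_num)).2 ?_
      cases m with
      | zero => simp
      | succ m' =>
        calc (m' + 1) * 2 ≤ (m' + 1) * (m' + 2) := Nat.mul_le_mul_left _ (by omega)
          _ = (m' + 2) * (m' + 1) := mul_comm _ _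
    have hterm2 : ∀ g ∈ G, (q ^ (∑ p ∈ P, min (acc g p.1 - acc g p.2) (N' + 1)) : ℝ)
        ≤ q ^ (K * (N' + 1)) * ∏ k : Fin m, r ^ (N' + 1 - g k) := by
      intro g hg
      rw [hG] at hg
      simp only [Fintype.mem_piFinset, Finset.mem_range] at hg
      have hgk : ∀ k, g k ≤ N' := fun k => by have := hg k; omega
      set s : ℕ := ∑ k : Fin m, (N' + 1 - g k) with hs
      have hEs : (∑ p ∈ P, min (acc g p.1 - acc g p.2) (N' + 1)) + s ≤ K * (N' + 1) := by
        have hι : Function.Injective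
            (fun k : Fin m => ((k.castSucc, k.succ) : Fin (m + 1) × Fin (m + 1))) := by
          intro k1 k2 hk
          have := congrArg Prod.fst hk
          simpa [Fin.ext_iff] using this
        set A := Finset.image
          (fun k : Fin m => ((k.castSucc, k.succ) : Fin (m + 1) × Fin (m + 1)))
          Finset.univ with hA
        have hAP : A ⊆ P := by
          intro p hp
          rw [hA] at hp
          simp only [Finset.mem_image, Finset.mem_univ, true_and] at hp
          obtain ⟨k, rfl⟩ := hp
          rw [hP]
          refine Finset.mem_filter.2 ⟨Finset.mem_offDiag.2
            ⟨Finset.mem_univ _, Finset.mem_univ _, (Fin.castSucc_lt_succ : k.castSucc < k.succ).ne⟩,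
            Fin.castSucc_lt_succ⟩
        have hcardA : A.card = m := by
          rw [hA, Finset.card_image_of_injective _ hι, Finset.card_univ, Fintype.card_fin]
        have hsd := Finset.sum_sdiff (f := fun p : Fin (m + 1) × Fin (m + 1) =>
          min (acc g p.1 - acc g p.2) (N' + 1)) hAP
        beta_reduce at hsd
        have hsumA : ∑ p ∈ A, min (acc g p.1 - acc g p.2) (N' + 1) = ∑ k : Fin m, g k := by
          rw [hA, Finset.sum_image (fun k1 _ k2 _ hk => hι hk)]
          refine Finset.sum_congr rfl fun k _ => ?_
          show min (acc g k.castSucc - acc g k.succ) (N' + 1) = g k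
          have h6 := acc_castSucc g k
          have h7 := hgk k
          omega
        have hsumrest : ∑ p ∈ P \ A, min (acc g p.1 - acc g p.2) (N' + 1)
            ≤ (K - m) * (N' + 1) := by
          have h8 := Finset.sum_le_card_nsmul (P \ A)
            (fun p => min (acc g p.1 - acc g p.2) (N' + 1)) (N' + 1)
            (fun p _ => min_le_right _ _)
          rw [Finset.card_sdiff_of_subset hAP, hcardA, hcardP] at h8
          simpa using h8
        have hgs : (∑ k : Fin m, g k) + s = m * (N' + 1) := by
          rw [hs, ← Finset.sum_add_distrib]
          rw [Finset.sum_congr rfl (fun k _ => (by have := hgk k; omega :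
            g k + (N' + 1 - g k) = N' + 1))]
          simp [Finset.sum_const, Finset.card_univ, mul_comm]
        have hKm : (K - m) * (N' + 1) + m * (N' + 1) = K * (N' + 1) := by
          rw [← Nat.add_mul, Nat.sub_add_cancel hmK]
        omega
      have hsle : s ≤ K * (N' + 1) := by omega
      have h1 : (q : ℝ) ^ (∑ p ∈ P, min (acc g p.1 - acc g p.2) (N' + 1))
          ≤ q ^ (K * (N' + 1) - s) := pow_le_pow_right₀ hq.le (by omega)
      have h3 : (q : ℝ) ^ (K * (N' + 1) - s) = q ^ (K * (N' + 1)) * (q ^ s)⁻¹ := by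
        rw [eq_mul_inv_iff_mul_eq₀ (pow_ne_zero _ hq0.ne')]
        rw [← pow_add]
        congr 1
        omega
      have h4 : (∏ k : Fin m, r ^ (N' + 1 - g k)) = ((q : ℝ) ^ s)⁻¹ := by
        rw [Finset.prod_pow_eq_pow_sum, ← hs, hr, inv_pow]
      rw [← h4] at h3
      exact h1.trans (le_of_eq h3)
    calc ∑ g ∈ G, (q ^ (∑ p ∈ P, min (acc g p.1 - acc g p.2) (N' + 1)) : ℝ)
        ≤ ∑ g ∈ G, (q : ℝ) ^ (K * (N' + 1)) * ∏ k : Fin m, r ^ (N' + 1 - g k) :=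
          Finset.sum_le_sum hterm2
      _ = (q : ℝ) ^ (K * (N' + 1)) * ∑ g ∈ G, ∏ k : Fin m, r ^ (N' + 1 - g k) := by
          rw [← Finset.mul_sum]
      _ = (q : ℝ) ^ (K * (N' + 1)) *
          ∏ k : Fin m, ∑ t ∈ Finset.range (N' + 1), r ^ (N' + 1 - t) := by
          rw [hG]
          exact congrArg (fun z => (q : ℝ) ^ (K * (N' + 1)) * z)
            (Finset.prod_univ_sum (fun _ : Fin m => Finset.range (N' + 1))
              (fun _ t => r ^ (N' + 1 - t))).symm
      _ ≤ (q : ℝ) ^ (K * (N' + 1)) * (1 - r)⁻¹ ^ m := by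
          refine mul_le_mul_of_nonneg_left ?_ (by positivity)
          calc ∏ k : Fin m, ∑ t ∈ Finset.range (N' + 1), r ^ (N' + 1 - t)
              ≤ ∏ _k : Fin m, (1 - r)⁻¹ :=
                Finset.prod_le_prod (fun k _ => Finset.sum_nonneg fun t _ => by positivity)
                  (fun k _ => hfactor)
            _ = (1 - r)⁻¹ ^ m := by simp
      _ ≤ ((1 - r)⁻¹ ^ m + (q ^ K)⁻¹ + 1) * q ^ (K * (N' + 1)) := by
          rw [mul_comm]
          refine mul_le_mul_of_nonneg_right ?_ (by positivity)
          have : (0 : ℝ) < (q ^ K)⁻¹ := by positivity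
          linarith
end
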